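/- Let X be a compact metric space, let m be a Borel measure on X that is positive on every nonempty open set, and let f : X → X be a continuous map such that m(f^{−1}(A)) = 0 whenever A is a Borel set with m(A) = 0. Assume f is topologically transitive, i.e. for all nonempty open sets U, V ⊆ X there exists n ≥ 0 with f^n(U) ∩ V ≠ ∅. Let μ₁ and μ₂ be Borel probability measures on X and suppose there are nonempty open sets V₁, V₂ ⊆ X with m(V₁ \ B(μ₁)) = 0 and m(V₂ \ B(μ₂)) = 0, where B(μ_i) denotes the basin of μ_i. Then μ₁ = μ₂. -/

import Mathlib

open Filter MeasureTheory Topology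

/-- The basin of a Borel probability measure `μ` for a map `f`: the set of points whose
Birkhoff averages of every continuous function converge to the corresponding
`μ`-integral. -/
def birkhoffBasin {X : Type*} [TopologicalSpace X] [MeasurableSpace X]
    (f : X → X) (μ : Measure X) : Set X :=
  {x | ∀ φ : C(X, ℝ),
    Tendsto (fun n : ℕ => (1 / (n : ℝ)) * ∑ j ∈ Finset.range n, φ (f^[j] x)) atTop
      (𝓝 (∫ y, φ y ∂μ))}

/-- Uniqueness of SRB measures for transitive maps: if `m` is positive on nonempty open
sets, `f` is continuous, nonsingular with respect to `m`, and topologically transitive,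
and the basins of `μ₁` and `μ₂` contain nonempty open sets modulo `m`-null sets,
then `μ₁ = μ₂`. -/
theorem unique_srb_of_transitive
    {X : Type*} [MetricSpace X] [CompactSpace X] [MeasurableSpace X] [BorelSpace X]
    (m : Measure X)
    (hm : ∀ U : Set X, IsOpen U → U.Nonempty → 0 < m U)
    (f : X → X) (hf : Continuous f)
    (hns : ∀ A : Set X, MeasurableSet A → m A = 0 → m (f ⁻¹' A) = 0)
    (htrans : ∀ U V : Set X, IsOpen U → IsOpen V → U.Nonempty → V.Nonempty →
      ∃ n : ℕ, ((f^[n]) '' U ∩ V).Nonempty)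
    (μ₁ μ₂ : Measure X) [IsProbabilityMeasure μ₁] [IsProbabilityMeasure μ₂]
    (V₁ V₂ : Set X) (hV₁ : IsOpen V₁) (hV₂ : IsOpen V₂)
    (hV₁ne : V₁.Nonempty) (hV₂ne : V₂.Nonempty)
    (h₁ : m (V₁ \ birkhoffBasin f μ₁) = 0)
    (h₂ : m (V₂ \ birkhoffBasin f μ₂) = 0) :
    μ₁ = μ₂ := by
  -- find n with V₁ ∩ f^[n] ⁻¹' V₂ nonempty
  obtain ⟨n, y, ⟨x0, hx0V, hx0e⟩, hyV2⟩ := htrans V₁ V₂ hV₁ hV₂ hV₁ne hV₂ne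
  set U : Set X := V₁ ∩ f^[n] ⁻¹' V₂ with hU
  have hfn : Continuous (f^[n]) := hf.iterate n
  have hUopen : IsOpen U := hV₁.inter (hV₂.preimage hfn)
  have hUne : U.Nonempty := ⟨x0, hx0V, by simp only [Set.mem_preimage, hx0e]; exact hyV2⟩
  have hUpos := hm U hUopen hUne
  -- null sets
  set N₂ : Set X := toMeasurable m (V₂ \ birkhoffBasin f μ₂) with hN₂
  have hN₂meas : MeasurableSet N₂ := measurableSet_toMeasurable _ _
  have hN₂0 : m N₂ = 0 := by rw [hN₂, measure_toMeasurable]; exact h₂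
  have hiter : ∀ k, m (f^[k] ⁻¹' N₂) = 0 := by
    intro k
    induction k with
    | zero => simpa using hN₂0
    | succ k ih =>
      rw [Function.iterate_succ, Set.preimage_comp]
      exact hns _ (hN₂meas.preimage (hf.iterate k).measurable) ih
  set Bad : Set X := (V₁ \ birkhoffBasin f μ₁) ∪ f^[n] ⁻¹' N₂ with hBad
  have hBad0 : m Bad = 0 :=
    le_antisymm (le_trans (measure_union_le _ _) (by rw [h₁, hiter n, add_zero])) zero_le
  have hxne : (U \ Bad).Nonempty := by
    by_contra hempty
    rw [Set.not_nonempty_iff_eq_empty, Set.diff_eq_empty] at hempty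
    exact absurd (le_antisymm ((measure_mono hempty).trans hBad0.le) zero_le)
      hUpos.ne'
  obtain ⟨x, ⟨hxV1, hxV2⟩, hxBad⟩ := hxne
  rw [hBad, Set.mem_union, not_or] at hxBad
  obtain ⟨hxB1', hxB2'⟩ := hxBad
  have hxB1 : x ∈ birkhoffBasin f μ₁ := by
    by_contra h; exact hxB1' ⟨hxV1, h⟩
  have hxB2 : f^[n] x ∈ birkhoffBasin f μ₂ := by
    by_contra h
    exact hxB2' (subset_toMeasurable m _ ⟨hxV2, h⟩)
  -- Birkhoff averages give equal integrals
  have key : ∀ φ : C(X, ℝ), ∫ y, φ y ∂μ₁ = ∫ y, φ y ∂μ₂ := by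
    intro φ
    have hx1 := hxB1 φ
    have hx2 := hxB2 φ
    set g : ℕ → ℝ := fun j => φ (f^[j] x) with hg
    set S : ℕ → ℝ := fun k => ∑ j ∈ Finset.range k, g j with hS
    -- the shifted averages also tend to ∫ φ dμ₁
    have t1 : Tendsto (fun k : ℕ => (1 / ((n + k : ℕ) : ℝ)) * S (n + k)) atTop
        (𝓝 (∫ y, φ y ∂μ₁)) := by
      have h := hx1.comp (tendsto_add_atTop_nat n)
      apply h.congr
      intro k
      simp only [Function.comp_apply, add_comm k n]
      rfl
    have t2 : Tendsto (fun k : ℕ => ((n + k : ℕ) : ℝ) / (k : ℝ)) atTop (𝓝 1) := by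
      have h0 : Tendsto (fun k : ℕ => (n : ℝ) / (k : ℝ)) atTop (𝓝 0) :=
        tendsto_const_div_atTop_nhds_zero_nat _
      have h1 : Tendsto (fun k : ℕ => (n : ℝ) / (k : ℝ) + (k : ℝ) / (k : ℝ)) atTop (𝓝 1) := by
        have : Tendsto (fun k : ℕ => (n : ℝ) / (k : ℝ) + 1) atTop (𝓝 (0 + 1)) :=
          h0.add tendsto_const_nhds
        rw [zero_add] at this
        apply this.congr'
        filter_upwards [eventually_ge_atTop 1] with k hk
        rw [div_self (by positivity : ((k : ℝ)) ≠ 0)]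
      apply h1.congr
      intro k
      rw [← add_div, Nat.cast_add]
    have t3 : Tendsto (fun k : ℕ => S n / (k : ℝ)) atTop (𝓝 0) :=
      tendsto_const_div_atTop_nhds_zero_nat _
    have t4 : Tendsto (fun k : ℕ =>
        (((n + k : ℕ) : ℝ) / (k : ℝ)) * ((1 / ((n + k : ℕ) : ℝ)) * S (n + k)) - S n / (k : ℝ))
        atTop (𝓝 (∫ y, φ y ∂μ₁)) := by
      have := (t2.mul t1).sub t3
      simpa using this
    have heq : ∀ᶠ k : ℕ in atTop,
        (((n + k : ℕ) : ℝ) / (k : ℝ)) * ((1 / ((n + k : ℕ) : ℝ)) * S (n + k)) - S n / (k : ℝ)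
          = (1 / (k : ℝ)) * ∑ j ∈ Finset.range k, φ (f^[j] (f^[n] x)) := by
      filter_upwards [eventually_ge_atTop 1] with k hk
      have hk0 : ((k : ℝ)) ≠ 0 := by positivity
      have hnk0 : (((n + k : ℕ)) : ℝ) ≠ 0 := by positivity
      have hsum : ∑ j ∈ Finset.range k, φ (f^[j] (f^[n] x)) = S (n + k) - S n := by
        have := Finset.sum_range_add g n k
        have hshift : ∀ j, φ (f^[j] (f^[n] x)) = g (n + j) := by
          intro j
          rw [hg]
          simp only [← Function.iterate_add_apply]
          rw [add_comm]
        simp only [hshift]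
        rw [hS]
        simp only [this]
        ring
      rw [hsum]
      field_simp
    have t5 : Tendsto (fun k : ℕ =>
        (1 / (k : ℝ)) * ∑ j ∈ Finset.range k, φ (f^[j] (f^[n] x))) atTop
        (𝓝 (∫ y, φ y ∂μ₁)) := t4.congr' heq
    exact tendsto_nhds_unique t5 hx2
  -- conclude equality of measures from equality of integrals
  apply ext_of_forall_lintegral_eq_of_IsFiniteMeasure
  intro g
  have hgc : Continuous fun x => ((g x : ℝ)) := NNReal.continuous_coe.comp g.continuous
  have hint : ∀ (μ : Measure X) [IsFiniteMeasure μ], Integrable (fun x => ((g x : ℝ))) μ :=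
    fun μ _ => hgc.integrable_of_hasCompactSupport (isClosed_tsupport _).isCompact
  rw [lintegral_coe_eq_integral _ (hint μ₁), lintegral_coe_eq_integral _ (hint μ₂)]
  congr 1
  exact key ⟨fun x => ((g x : ℝ)), hgc⟩
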